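/- In the dihedral group D₃₀ of order 30, the dihedral subgroup of order 6 (isomorphic to S₃) is a Schmidt group that is modular in D₃₀ but not subnormal in D₃₀. -/

import Mathlib

/-- A subgroup `M` is modular in `G` if it is a modular element of the subgroup lattice. -/
def IsModularSubgroup {G : Type*} [Group G] (M : Subgroup G) : Prop :=
  (∀ X Z : Subgroup G, X ≤ Z → (X ⊔ M) ⊓ Z = X ⊔ (M ⊓ Z)) ∧
  (∀ Y Z : Subgroup G, M ≤ Z → (M ⊔ Y) ⊓ Z = M ⊔ (Y ⊓ Z))

/-- A subgroup `H` is subnormal in `G` if there is a chain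
`H = H₀ ⊴ H₁ ⊴ … ⊴ Hₙ = G` with each term normal in the next. -/
def IsSubnormal {G : Type*} [Group G] (H : Subgroup G) : Prop :=
  ∃ (n : ℕ) (c : ℕ → Subgroup G), c 0 = H ∧ c n = ⊤ ∧
    ∀ i < n, c i ≤ c (i + 1) ∧ ((c i).subgroupOf (c (i + 1))).Normal

/-- A Schmidt group is a finite non-nilpotent group all of whose proper
subgroups are nilpotent. -/
def IsSchmidtGroup (S : Type*) [Group S] : Prop :=
  Finite S ∧ ¬ Group.IsNilpotent S ∧ ∀ H : Subgroup S, H ≠ ⊤ → Group.IsNilpotent ↥H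

/-- The Fitting subgroup: the join of all nilpotent normal subgroups. -/
def FittingSubgroup (G : Type*) [Group G] : Subgroup G :=
  ⨆ H : {H : Subgroup G // H.Normal ∧ Group.IsNilpotent ↥H}, (H : Subgroup G)

instance FittingSubgroup.normal {G : Type*} [Group G] : (FittingSubgroup G).Normal := by
  constructor
  intro n hn g
  refine Subgroup.iSup_induction (G := G)
    (fun H : {H : Subgroup G // H.Normal ∧ Group.IsNilpotent ↥H} => (H : Subgroup G))
    (C := fun x => g * x * g⁻¹ ∈ FittingSubgroup G) hn ?_ ?_ ?_
  · intro H x hx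
    exact Subgroup.mem_iSup_of_mem H (H.2.1.conj_mem x hx g)
  · simpa using (FittingSubgroup G).one_mem
  · intro x y hx hy
    have : (g * x * g⁻¹) * (g * y * g⁻¹) = g * (x * y) * g⁻¹ := by group
    exact this ▸ (FittingSubgroup G).mul_mem hx hy



namespace D30Aux
open DihedralGroup Subgroup

abbrev G := DihedralGroup 15

def Mpred : G → Prop
  | .r i => 3 * i = 0
  | .sr i => 3 * i = 0

instance : DecidablePred Mpred := fun x => by
  cases x <;> exact inferInstanceAs (Decidable (3 * _ = 0))

def Msub : Subgroup G where
  carrier := {x | Mpred x}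
  one_mem' := by show Mpred 1; decide
  mul_mem' := by
    intro a b ha hb
    exact (by decide : ∀ a b : G, Mpred a → Mpred b → Mpred (a*b)) a b ha hb
  inv_mem' := by
    intro a ha
    exact (by decide : ∀ a : G, Mpred a → Mpred a⁻¹) a ha

instance : DecidablePred (· ∈ Msub) := fun x => decidable_of_iff (Mpred x) Iff.rfl

lemma r_pow15 (i : ZMod 15) (n : ℕ) : (r i : G) ^ n = r ((n : ZMod 15) * i) := by
  induction n with
  | zero => simp only [pow_zero, Nat.cast_zero, zero_mul]; rfl
  | succ n ih => rw [pow_succ, ih, r_mul_r]; congr 1; push_cast; ring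

set_option maxHeartbeats 2000000 in
lemma F1 : ∀ i j : ZMod 15, 3 * i ≠ 0 → ∃ a : Fin 15, ∃ m : ZMod 15,
    3 * m = 0 ∧ ((a : ℕ) : ZMod 15) * i + m = j := by decide

set_option maxHeartbeats 2000000 in
lemma F2 : ∀ i j : ZMod 15, 3 * i ≠ 0 → ∃ a : Fin 15, ∃ m : ZMod 15,
    3 * m = 0 ∧ m - ((a : ℕ) : ZMod 15) * i = j := by decide

lemma hMeq : Subgroup.closure {DihedralGroup.r 5, DihedralGroup.sr 0} = Msub := by
  apply le_antisymm
  · rw [closure_le]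
    rintro x (rfl | rfl)
    · exact (by decide : Mpred (DihedralGroup.r 5 : G))
    · exact (by decide : Mpred (DihedralGroup.sr 0 : G))
  · intro x hx
    cases x with
    | r i =>
      have hi : 3 * i = 0 := hx
      have : i = 0 ∨ i = 5 ∨ i = 10 :=
        (by decide : ∀ i : ZMod 15, 3 * i = 0 → i = 0 ∨ i = 5 ∨ i = 10) i hi
      have h5 : (r 5 : G) ∈ Subgroup.closure {DihedralGroup.r 5, DihedralGroup.sr 0} :=
        subset_closure (Set.mem_insert _ _)
      rcases this with rfl | rfl | rfl
      · rw [show (r 0 : G) = 1 from rfl]; exact one_mem _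
      · exact h5
      · rw [show (r 10 : G) = r 5 * r 5 by decide]; exact mul_mem h5 h5
    | sr i =>
      have hi : 3 * i = 0 := hx
      have : i = 0 ∨ i = 5 ∨ i = 10 :=
        (by decide : ∀ i : ZMod 15, 3 * i = 0 → i = 0 ∨ i = 5 ∨ i = 10) i hi
      have h5 : (r 5 : G) ∈ Subgroup.closure {DihedralGroup.r 5, DihedralGroup.sr 0} :=
        subset_closure (Set.mem_insert _ _)
      have hs : (sr 0 : G) ∈ Subgroup.closure {DihedralGroup.r 5, DihedralGroup.sr 0} :=
        subset_closure (Set.mem_insert_of_mem _ rfl)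
      rcases this with rfl | rfl | rfl
      · exact hs
      · rw [show (sr 5 : G) = sr 0 * r 5 by decide]; exact mul_mem hs h5
      · rw [show (sr 10 : G) = sr 0 * (r 5 * r 5) by decide]
        exact mul_mem hs (mul_mem h5 h5)

set_option maxRecDepth 100000 in
set_option maxHeartbeats 4000000 in
lemma F3 : ∀ i t : ZMod 15, 3 * i ≠ 0 → 3 * t ≠ 0 → ∃ k a c : Fin 15,
    3 * (i + ((k : ℕ) : ZMod 15) * t) = 0 ∧ 3 * (((c : ℕ) : ZMod 15) * t) = 0 ∧
    ((a : ℕ) : ZMod 15) * (((k : ℕ) : ZMod 15) * t) + ((c : ℕ) : ZMod 15) * t = t := by decide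

lemma mem_sup_l {H K : Subgroup G} {x : G} (h : x ∈ H) : x ∈ H ⊔ K :=
  SetLike.le_def.mp le_sup_left h

lemma mem_sup_r {H K : Subgroup G} {x : G} (h : x ∈ K) : x ∈ H ⊔ K :=
  SetLike.le_def.mp le_sup_right h

lemma rot_mem (i t : ZMod 15) (hi : 3 * i ≠ 0) (W : Subgroup G)
    (hiW : sr i ∈ W) (htW : r t ∈ W) :
    (r t : G) ∈ Subgroup.closure {DihedralGroup.sr i} ⊔ (Msub ⊓ W) := by
  by_cases h5 : 3 * t = 0
  · exact mem_sup_r (mem_inf.mpr ⟨h5, htW⟩)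
  · obtain ⟨k, a, c, h1, h2, h3⟩ := F3 i t hi h5
    set T := Subgroup.closure {DihedralGroup.sr i} ⊔ (Msub ⊓ W) with hT
    have hxT : (sr i : G) ∈ T := mem_sup_l (subset_closure rfl)
    have hsrm : (sr (i + ((k:ℕ) : ZMod 15) * t) : G) ∈ W := by
      have he : (sr (i + ((k:ℕ) : ZMod 15) * t) : G) = sr i * (r t) ^ (k:ℕ) := by
        rw [r_pow15, sr_mul_r]
      rw [he]; exact mul_mem hiW (pow_mem htW _)
    have hsrmT : (sr (i + ((k:ℕ) : ZMod 15) * t) : G) ∈ T :=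
      mem_sup_r (mem_inf.mpr ⟨h1, hsrm⟩)
    have hq : (r (((k:ℕ) : ZMod 15) * t) : G) ∈ T := by
      have he : (r (((k:ℕ) : ZMod 15) * t) : G) = sr i * sr (i + ((k:ℕ) : ZMod 15) * t) := by
        rw [sr_mul_sr, add_sub_cancel_left]
      rw [he]; exact mul_mem hxT hsrmT
    have hct : (r (((c:ℕ) : ZMod 15) * t) : G) ∈ T := by
      refine mem_sup_r (mem_inf.mpr ⟨h2, ?_⟩)
      rw [show (r (((c:ℕ) : ZMod 15) * t) : G) = (r t) ^ (c:ℕ) from (r_pow15 _ _).symm]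
      exact pow_mem htW _
    have hfin : (r t : G) = (r (((k:ℕ) : ZMod 15) * t)) ^ (a:ℕ) * r (((c:ℕ) : ZMod 15) * t) := by
      rw [r_pow15, r_mul_r, h3]
    rw [hfin]; exact mul_mem (pow_mem hq _) hct

lemma lemB (x z : G) (hx : x ∉ Msub) :
    z ∈ Subgroup.closure {x} ⊔ (Msub ⊓ Subgroup.closure {x, z}) := by
  have hxW : x ∈ Subgroup.closure {x, z} := subset_closure (Set.mem_insert _ _)
  have hzW : z ∈ Subgroup.closure {x, z} := subset_closure (Set.mem_insert_of_mem _ rfl)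
  have hxT : x ∈ Subgroup.closure {x} ⊔ (Msub ⊓ Subgroup.closure {x, z}) :=
    mem_sup_l (subset_closure rfl)
  cases x with
  | r i =>
    have hi : 3 * i ≠ 0 := fun h => hx h
    cases z with
    | r j =>
      obtain ⟨a, m, hm, he⟩ := F1 i j hi
      have key : (r j : G) = (r i) ^ (a:ℕ) * r m := by
        rw [r_pow15, r_mul_r, he]
      have hrm : (r m : G) ∈ Subgroup.closure {DihedralGroup.r i, DihedralGroup.r j} := by
        have h2 : (r m : G) = ((r i : G) ^ (a:ℕ))⁻¹ * r j := by rw [key]; group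
        rw [h2]; exact mul_mem (inv_mem (pow_mem hxW _)) hzW
      have hm' : (r m : G) ∈ Msub := hm
      have hc := mem_sup_r (H := Subgroup.closure {DihedralGroup.r i}) (mem_inf.mpr ⟨hm', hrm⟩)
      have hmem := mul_mem (pow_mem hxT (a:ℕ)) hc
      rwa [← key] at hmem
    | sr j =>
      obtain ⟨a, m, hm, he⟩ := F2 i j hi
      have key : (sr j : G) = (r i) ^ (a:ℕ) * sr m := by
        rw [r_pow15, r_mul_sr, he]
      have hrm : (sr m : G) ∈ Subgroup.closure {DihedralGroup.r i, DihedralGroup.sr j} := by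
        have h2 : (sr m : G) = ((r i : G) ^ (a:ℕ))⁻¹ * sr j := by rw [key]; group
        rw [h2]; exact mul_mem (inv_mem (pow_mem hxW _)) hzW
      have hm' : (sr m : G) ∈ Msub := hm
      have hc := mem_sup_r (H := Subgroup.closure {DihedralGroup.r i}) (mem_inf.mpr ⟨hm', hrm⟩)
      have hmem := mul_mem (pow_mem hxT (a:ℕ)) hc
      rwa [← key] at hmem
  | sr i =>
    have hi : 3 * i ≠ 0 := fun h => hx h
    cases z with
    | r j => exact rot_mem i j hi _ hxW hzW
    | sr j =>
      have htW : (r (j - i) : G) ∈ Subgroup.closure {DihedralGroup.sr i, DihedralGroup.sr j} := by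
        rw [show (r (j - i) : G) = sr i * sr j from (sr_mul_sr i j).symm]
        exact mul_mem hxW hzW
      have h1 := rot_mem i (j - i) hi _ hxW htW
      have key : (sr j : G) = sr i * r (j - i) := by rw [sr_mul_r]; congr 1; ring
      have hmem := mul_mem hxT h1
      rwa [← key] at hmem

lemma cardM : Nat.card ↥Msub = 6 := by
  rw [Nat.card_eq_fintype_card]
  decide

lemma hcardG : Nat.card G = 30 := by
  rw [Nat.card_eq_fintype_card, DihedralGroup.card]

lemma max_M (Z : Subgroup G) (hMZ : Msub ≤ Z) : Z = Msub ∨ Z = ⊤ := by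
  have hd1 : Nat.card Msub ∣ Nat.card Z := Subgroup.card_dvd_of_le hMZ
  rw [cardM] at hd1
  have hd2 : Nat.card Z ∣ 30 := hcardG ▸ Subgroup.card_subgroup_dvd_card Z
  have hle : Nat.card Z ≤ 30 := Nat.le_of_dvd (by norm_num) hd2
  have h630 : Nat.card Z = 6 ∨ Nat.card Z = 30 := by
    interval_cases h : (Nat.card Z) <;> omega
  rcases h630 with h | h
  · exact Or.inl (Subgroup.eq_of_le_of_card_ge hMZ (by rw [cardM, h])).symm
  · exact Or.inr (Subgroup.eq_top_of_card_eq Z (by rw [h, hcardG]))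

lemma modular_Msub :
    (∀ X Z : Subgroup G, X ≤ Z → (X ⊔ Msub) ⊓ Z = X ⊔ (Msub ⊓ Z)) ∧
    (∀ Y Z : Subgroup G, Msub ≤ Z → (Msub ⊔ Y) ⊓ Z = Msub ⊔ (Y ⊓ Z)) := by
  constructor
  · intro X Z hXZ
    by_cases hXM : X ≤ Msub
    · rw [sup_eq_right.mpr hXM, sup_eq_right.mpr (le_inf hXM hXZ)]
    · obtain ⟨x, hxX, hxM⟩ := SetLike.not_le_iff_exists.mp hXM
      apply le_antisymm
      · intro g hg
        have hgZ : g ∈ Z := (Subgroup.mem_inf.mp hg).2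
        have hle : Subgroup.closure {x} ⊔ (Msub ⊓ Subgroup.closure {x, g}) ≤
            X ⊔ (Msub ⊓ Z) := by
          apply sup_le_sup
          · rw [closure_le]
            simpa using hxX
          · apply inf_le_inf_left
            rw [closure_le]
            rintro y (rfl | rfl)
            · exact hXZ hxX
            · exact hgZ
        exact hle (lemB x g hxM)
      · exact sup_le (le_inf le_sup_left hXZ)
          (le_inf (inf_le_left.trans le_sup_right) inf_le_right)
  · intro Y Z hMZ
    rcases max_M Z hMZ with rfl | rfl
    · rw [inf_eq_right.mpr le_sup_left, sup_eq_left.mpr inf_le_right]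
    · rw [inf_top_eq, inf_top_eq]

lemma not_normal_Msub : ¬ Msub.Normal := by
  intro h
  have h0 : (sr 0 : G) ∈ Msub := (by decide : Mpred (DihedralGroup.sr 0 : G))
  have h1 := h.conj_mem _ h0 (r 1)
  rw [show ((r 1 : G) * sr 0 * (r 1)⁻¹) = sr 13 by decide] at h1
  exact (by decide : ¬ Mpred (DihedralGroup.sr 13 : G)) h1

lemma Msub_ne_top : Msub ≠ ⊤ := by
  intro h
  have : (r 1 : G) ∈ Msub := h ▸ Subgroup.mem_top _
  exact (by decide : ¬ Mpred (DihedralGroup.r 1 : G)) this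

lemma not_subnormal_Msub :
    ¬ ∃ (n : ℕ) (c : ℕ → Subgroup G), c 0 = Msub ∧ c n = ⊤ ∧
      ∀ i < n, c i ≤ c (i + 1) ∧ ((c i).subgroupOf (c (i + 1))).Normal := by
  rintro ⟨n, c, hc0, hcn, hstep⟩
  have key : ∀ i, i ≤ n → c i = Msub := by
    intro i
    induction i with
    | zero => exact fun _ => hc0
    | succ i ih =>
      intro hin
      have hi' : c i = Msub := ih (Nat.le_of_succ_le hin)
      obtain ⟨hle, hnorm⟩ := hstep i (Nat.lt_of_succ_le hin)
      rcases max_M (c (i + 1)) (hi' ▸ hle) with h | h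
      · exact h
      · exfalso
        apply not_normal_Msub
        rw [hi', h] at hnorm
        constructor
        intro m hm g
        have h2 := hnorm.conj_mem ⟨m, Subgroup.mem_top m⟩
          (Subgroup.mem_subgroupOf.mpr hm) ⟨g, Subgroup.mem_top g⟩
        exact Subgroup.mem_subgroupOf.mp h2
  exact Msub_ne_top ((key n le_rfl) ▸ hcn)

def phi : DihedralGroup 3 →* G where
  toFun := fun x => match x with
    | .r i => .r (5 * i.val)
    | .sr i => .sr (5 * i.val)
  map_one' := by decide
  map_mul' := by decide

lemma phi_range : phi.range = Msub := by
  ext g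
  simp only [MonoidHom.mem_range]
  revert g
  decide

lemma phi_inj : Function.Injective phi := fun a b h =>
  (by decide : ∀ a b : DihedralGroup 3, phi a = phi b → a = b) a b h

def negAdd (i : ZMod 3) : Equiv.Perm (ZMod 3) where
  toFun := fun x => i - x
  invFun := fun x => i - x
  left_inv := fun x => by simp
  right_inv := fun x => by simp

def act : DihedralGroup 3 →* Equiv.Perm (ZMod 3) where
  toFun := fun x => match x with
    | .r i => Equiv.addLeft i
    | .sr i => negAdd (-i)
  map_one' := by decide
  map_mul' := by decide

lemma act_bij : Function.Bijective act := by
  rw [Fintype.bijective_iff_injective_and_card]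
  constructor
  · exact fun a b h => (by decide : ∀ a b : DihedralGroup 3, act a = act b → a = b) a b h
  · decide

noncomputable def iso2 : DihedralGroup 3 ≃* Equiv.Perm (ZMod 3) :=
  MulEquiv.ofBijective act act_bij

noncomputable def isoAll : ↥Msub ≃* Equiv.Perm (Fin 3) :=
  ((MulEquiv.subgroupCongr phi_range.symm).trans (MonoidHom.ofInjective phi_inj).symm).trans iso2

def K3pred : DihedralGroup 3 → Prop := fun x => x = 1 ∨ x = .sr 0

instance : DecidablePred K3pred := fun x => inferInstanceAs (Decidable (_ ∨ _))

def K3 : Subgroup (DihedralGroup 3) where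
  carrier := {x | K3pred x}
  one_mem' := Or.inl rfl
  mul_mem' := by
    intro a b ha hb
    exact (by decide : ∀ a b : DihedralGroup 3, K3pred a → K3pred b → K3pred (a*b)) a b ha hb
  inv_mem' := by
    intro a ha
    exact (by decide : ∀ a : DihedralGroup 3, K3pred a → K3pred a⁻¹) a ha

lemma not_nilpotent_D3 : ¬ Group.IsNilpotent (DihedralGroup 3) := by
  intro h
  have hcond := @normalizerCondition_of_isNilpotent (DihedralGroup 3) _ h
  have hlt : K3 < ⊤ := lt_top_iff_ne_top.mpr (by
    intro h
    have : (DihedralGroup.r 1 : DihedralGroup 3) ∈ K3 := h ▸ Subgroup.mem_top _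
    exact (by decide : ¬ K3pred (DihedralGroup.r 1)) this)
  have hlt2 := hcond K3 hlt
  have hn : Subgroup.normalizer (K3 : Set (DihedralGroup 3)) ≤ K3 := by
    intro g hg
    rw [Subgroup.mem_normalizer_iff] at hg
    exact (by decide : ∀ g : DihedralGroup 3,
      (∀ h, K3pred h ↔ K3pred (g * h * g⁻¹)) → K3pred g) g (fun h => hg h)
  exact (lt_irrefl K3) (lt_of_lt_of_le hlt2 hn)

lemma not_nilpotent_Msub : ¬ Group.IsNilpotent ↥Msub := by
  intro h
  apply not_nilpotent_D3
  have e : ↥Msub ≃* DihedralGroup 3 :=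
    (MulEquiv.subgroupCongr phi_range.symm).trans (MonoidHom.ofInjective phi_inj).symm
  exact @nilpotent_of_surjective _ _ _ _ h e.toMonoidHom e.surjective

lemma nilpotent_of_small (K : Type*) [Group K]
    (h : Nat.card K = 1 ∨ Nat.card K = 2 ∨ Nat.card K = 3) : Group.IsNilpotent K := by
  rcases h with h | h | h
  · have : Subsingleton K := (Nat.card_eq_one_iff_unique.mp h).1
    exact ⟨0, by
      apply eq_top_iff.mpr
      intro x _
      rw [Subsingleton.elim x 1]
      exact one_mem _⟩
  · haveI : Fact (Nat.card K).Prime := ⟨by rw [h]; norm_num⟩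
    haveI : IsCyclic K := isCyclic_of_prime_card (p := Nat.card K) rfl
    letI : CommGroup K := IsCyclic.commGroup
    exact CommGroup.isNilpotent
  · haveI : Fact (Nat.card K).Prime := ⟨by rw [h]; norm_num⟩
    haveI : IsCyclic K := isCyclic_of_prime_card (p := Nat.card K) rfl
    letI : CommGroup K := IsCyclic.commGroup
    exact CommGroup.isNilpotent

lemma schmidt_parts (H : Subgroup ↥Msub) (hH : H ≠ ⊤) : Group.IsNilpotent ↥H := by
  apply nilpotent_of_small
  have hdvd : Nat.card H ∣ 6 := cardM ▸ Subgroup.card_subgroup_dvd_card H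
  have hne : Nat.card H ≠ 6 := fun h =>
    hH (Subgroup.eq_top_of_card_eq H (by rw [h, cardM]))
  have hpos : 0 < Nat.card H := Nat.card_pos
  have hle : Nat.card H ≤ 6 := Nat.le_of_dvd (by norm_num) hdvd
  interval_cases h : (Nat.card ↥H) <;> omega

end D30Aux

/-- In the dihedral group `D₃₀` of order `30`, the dihedral subgroup of order `6`
(generated by the rotation `r^5` of order `3` and a reflection, and isomorphic to `S₃`)
is a Schmidt group that is modular but not subnormal in `D₃₀`. -/
theorem dihedral30_schmidt_subgroup_modular_not_subnormal :
    Nat.card ↥(Subgroup.closure {DihedralGroup.r 5, DihedralGroup.sr 0} :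
      Subgroup (DihedralGroup 15)) = 6 ∧
    Nonempty (↥(Subgroup.closure {DihedralGroup.r 5, DihedralGroup.sr 0} :
      Subgroup (DihedralGroup 15)) ≃* Equiv.Perm (Fin 3)) ∧
    IsSchmidtGroup ↥(Subgroup.closure {DihedralGroup.r 5, DihedralGroup.sr 0} :
      Subgroup (DihedralGroup 15)) ∧
    IsModularSubgroup (Subgroup.closure {DihedralGroup.r 5, DihedralGroup.sr 0} :
      Subgroup (DihedralGroup 15)) ∧
    ¬ IsSubnormal (Subgroup.closure {DihedralGroup.r 5, DihedralGroup.sr 0} :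
      Subgroup (DihedralGroup 15)) := by
  rw [D30Aux.hMeq]
  exact ⟨D30Aux.cardM, ⟨D30Aux.isoAll⟩,
    ⟨inferInstance, D30Aux.not_nilpotent_Msub, D30Aux.schmidt_parts⟩,
    D30Aux.modular_Msub, D30Aux.not_subnormal_Msub⟩
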